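/- For a tree $T$, any two minimum skew forcing sets $S_1, S_2$ of $T$ are connected by a sequence of minimum skew forcing sets each differing from the next by exchanging a single vertex (i.e., the token exchange reconfiguration graph of minimum skew forcing sets of a tree is connected). -/

import Mathlib

open SimpleGraph

variable {V : Type*}

/-- A skew fort: a nonempty vertex set `F` such that no vertex of the graph
has exactly one neighbor in `F`. -/
def SkewFort (G : SimpleGraph V) (F : Set V) : Prop :=
  F.Nonempty ∧ ∀ v : V, (G.neighborSet v ∩ F).ncard ≠ 1

/-- The vertices eventually forced blue by the skew color change rule starting
from the set `S` of initially blue vertices: a vertex `v` is forced if some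
vertex `u` has `v` as its unique non-blue neighbor. -/
inductive SkewForced (G : SimpleGraph V) (S : Set V) : V → Prop
  | mem : ∀ {v}, v ∈ S → SkewForced G S v
  | force : ∀ {u v}, G.Adj u v → (∀ w, G.Adj u w → w ≠ v → SkewForced G S w) →
      SkewForced G S v

/-- The skew closure of `S`: the final set of blue vertices. -/
def skewClosure (G : SimpleGraph V) (S : Set V) : Set V := {v | SkewForced G S v}

/-- `S` is a skew forcing set if its skew closure is everything. -/
def IsSkewForcingSet (G : SimpleGraph V) (S : Set V) : Prop :=
  skewClosure G S = Set.univ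

/-- The skew forcing number: minimum cardinality of a skew forcing set. -/
noncomputable def skewForcingNumber (G : SimpleGraph V) : ℕ :=
  sInf {n | ∃ S : Set V, S.ncard = n ∧ IsSkewForcingSet G S}


namespace SkewAux

set_option linter.unusedSectionVars false
set_option linter.unusedVariables false

open scoped Classical

variable {V : Type*} [DecidableEq V] {T : SimpleGraph V}

lemma adj_dist_ne (hT : T.IsTree) (r : V) {x w : V} (h : T.Adj x w) :
    T.dist r x ≠ T.dist r w := by
  intro heq
  obtain ⟨P, hP, hPl⟩ := hT.isConnected.exists_path_of_dist r x
  by_cases hw : w ∈ P.support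
  · have hspec := P.take_spec hw
    have hlen : (P.takeUntil w hw).length + (P.dropUntil w hw).length = P.length := by
      rw [← Walk.length_append, hspec]
    have h1 : T.dist r w ≤ (P.takeUntil w hw).length := dist_le _
    have h2 : T.dist w x ≤ (P.dropUntil w hw).length := dist_le _
    have h3 : T.dist w x = 1 := dist_eq_one_iff_adj.2 h.symm
    omega
  · have hQ : (P.concat h).IsPath := by
      apply Walk.IsPath.mk'
      rw [Walk.support_concat]
      simp [List.concat_eq_append, List.nodup_append, hP.support_nodup, hw]
      exact fun a ha hh => hw (hh ▸ ha)
    obtain ⟨R, hR, hRl⟩ := hT.isConnected.exists_path_of_dist r w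
    have := (hT.existsUnique_path r w).unique hQ hR
    have hlen : (P.concat h).length = R.length := by rw [this]
    rw [Walk.length_concat, hPl, hRl] at hlen
    omega

lemma parent_unique (hT : T.IsTree) (r : V) {w x y : V}
    (hx : T.Adj w x) (hy : T.Adj w y)
    (hdx : T.dist r x + 1 = T.dist r w) (hdy : T.dist r y + 1 = T.dist r w) :
    x = y := by
  have key : ∀ {z : V}, T.Adj w z → T.dist r z + 1 = T.dist r w →
      ∃ (Q : T.Walk r w), Q.IsPath ∧ ∃ (P : T.Walk r z) (hzw : T.Adj z w), Q = P.concat hzw := by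
    intro z hz hdz
    obtain ⟨P, hP, hPl⟩ := hT.isConnected.exists_path_of_dist r z
    have hw : w ∉ P.support := by
      intro hw
      have hspec := P.take_spec hw
      have hlen : (P.takeUntil w hw).length + (P.dropUntil w hw).length = P.length := by
        rw [← Walk.length_append, hspec]
      have h1 : T.dist r w ≤ (P.takeUntil w hw).length := dist_le _
      have h2 : T.dist w z ≤ (P.dropUntil w hw).length := dist_le _
      have h3 : T.dist w z = 1 := dist_eq_one_iff_adj.2 hz
      omega
    refine ⟨P.concat hz.symm, ?_, P, hz.symm, rfl⟩
    apply Walk.IsPath.mk'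
    rw [Walk.support_concat]
    simp [List.concat_eq_append, List.nodup_append, hP.support_nodup, hw]
    exact fun a ha hh => hw (hh ▸ ha)
  obtain ⟨Qx, hQx, Px, hxw, hQxe⟩ := key hx hdx
  obtain ⟨Qy, hQy, Py, hyw, hQye⟩ := key hy hdy
  have : Qx = Qy := (hT.existsUnique_path r w).unique hQx hQy
  rw [hQxe, hQye] at this
  obtain ⟨hv, -⟩ := Walk.concat_inj this
  exact hv

/-- In a tree, any finite nonempty vertex set has a member with at most one
neighbor inside the set. -/
lemma exists_leaf (hT : T.IsTree) (W : Finset V) (hW : W.Nonempty) :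
    ∃ w ∈ W, ∀ x ∈ W, ∀ y ∈ W, T.Adj w x → T.Adj w y → x = y := by
  have : Nonempty V := ⟨hW.choose⟩
  obtain ⟨r⟩ := this
  obtain ⟨w, hwW, hmax⟩ := W.exists_max_image (fun v => T.dist r v) hW
  refine ⟨w, hwW, fun x hx y hy hax hay => ?_⟩
  have hne := adj_dist_ne hT r (x := x) (w := w) hax.symm
  have hne' := adj_dist_ne hT r (x := y) (w := w) hay.symm
  have hb1 : T.dist r w ≤ T.dist r x + 1 := by
    have := hT.isConnected.dist_triangle (u := r) (v := x) (w := w)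
    have h1 : T.dist x w = 1 := dist_eq_one_iff_adj.2 hax.symm
    omega
  have hb2 : T.dist r w ≤ T.dist r y + 1 := by
    have := hT.isConnected.dist_triangle (u := r) (v := y) (w := w)
    have h1 : T.dist y w = 1 := dist_eq_one_iff_adj.2 hay.symm
    omega
  have hx' := hmax x hx
  have hy' := hmax y hy
  exact parent_unique hT r hax hay (by omega) (by omega)

/-- In a tree, a set of edges inside a finite nonempty vertex set `W` has fewer
than `|W|` elements. -/
lemma card_edges_lt (hT : T.IsTree) (W : Finset V) (hW : W.Nonempty)
    (E : Finset (Sym2 V))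
    (hE : ∀ e ∈ E, ∃ a b, e = s(a, b) ∧ T.Adj a b ∧ a ∈ W ∧ b ∈ W) :
    E.card < W.card := by
  classical
  induction W using Finset.strongInduction generalizing E with
  | _ W ih =>
  obtain ⟨w, hwW, hleaf⟩ := exists_leaf hT W hW
  by_cases hW' : (W.erase w).Nonempty
  · set E' := E.filter (fun e => w ∉ e) with hE'def
    have hE'card : E'.card < (W.erase w).card := by
      apply ih (W.erase w) (Finset.erase_ssubset hwW) hW'
      intro e he
      rw [hE'def, Finset.mem_filter] at he
      obtain ⟨a, b, rfl, hab, ha, hb⟩ := hE e he.1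
      have hwa : a ≠ w := fun h => he.2 (by simp [h])
      have hwb : b ≠ w := fun h => he.2 (by simp [h])
      exact ⟨a, b, rfl, hab, Finset.mem_erase.2 ⟨hwa, ha⟩, Finset.mem_erase.2 ⟨hwb, hb⟩⟩
    have hrest : (E.filter (fun e => w ∈ e)).card ≤ 1 := by
      apply Finset.card_le_one.2
      intro e1 he1 e2 he2
      rw [Finset.mem_filter] at he1 he2
      obtain ⟨a1, b1, rfl, hab1, ha1, hb1⟩ := hE _ he1.1
      obtain ⟨a2, b2, rfl, hab2, ha2, hb2⟩ := hE _ he2.1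
      have hm1 := he1.2
      have hm2 := he2.2
      rw [Sym2.mem_iff] at hm1 hm2
      -- each edge is s(w, x) with x ∈ W adjacent to w
      rcases hm1 with rfl | rfl <;> rcases hm2 with rfl | rfl
      · rw [hleaf b1 hb1 b2 hb2 hab1 hab2]
      · rw [hleaf b1 hb1 a2 ha2 hab1 hab2.symm, Sym2.eq_swap]
      · rw [hleaf a1 ha1 b2 hb2 hab1.symm hab2, Sym2.eq_swap]
      · rw [Sym2.eq_swap, hleaf a1 ha1 a2 ha2 hab1.symm hab2.symm, Sym2.eq_swap]
    have hsplit : E'.card + (E.filter (fun e => w ∈ e)).card = E.card := by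
      rw [hE'def]
      have := Finset.card_filter_add_card_filter_not (s := E) (p := fun e => w ∈ e)
      omega
    have hcard : (W.erase w).card + 1 = W.card := Finset.card_erase_add_one hwW
    omega
  · -- W = {w}
    have hsing : W = {w} := by
      apply Finset.eq_singleton_iff_unique_mem.2
      exact ⟨hwW, fun x hx => by
        by_contra hne
        exact hW' ⟨x, Finset.mem_erase.2 ⟨hne, hx⟩⟩⟩
    have : E = ∅ := by
      apply Finset.eq_empty_iff_forall_notMem.2
      intro e he
      obtain ⟨a, b, rfl, hab, ha, hb⟩ := hE e he
      rw [hsing, Finset.mem_singleton] at ha hb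
      subst ha; subst hb
      exact T.irrefl hab
    rw [this, hsing]
    simp


section PM

variable [Fintype V] (T : SimpleGraph V)

/-- `m` is a perfect matching of `W` inside `T`. -/
def IsPM (W : Set V) (m : V → V) : Prop :=
  ∀ w ∈ W, m w ∈ W ∧ m w ≠ w ∧ T.Adj w (m w) ∧ m (m w) = w

def PM (W : Set V) : Prop := ∃ m, IsPM T W m

variable {T}

lemma IsPM.extend_pair {W : Set V} {m : V → V} (h : IsPM T W m) {a b : V}
    (hab : T.Adj a b) (ha : a ∉ W) (hb : b ∉ W) :
    IsPM T (W ∪ {a, b}) (fun v => if v = a then b else if v = b then a else m v) := by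
  have hne : a ≠ b := hab.ne
  set m' := fun v => if v = a then b else if v = b then a else m v with hm'def
  have ea : m' a = b := by simp [hm'def]
  have eb : m' b = a := by simp [hm'def, hne.symm]
  intro w hw
  rcases hw with hw | hw
  · have hwa : w ≠ a := fun hh => ha (hh ▸ hw)
    have hwb : w ≠ b := fun hh => hb (hh ▸ hw)
    obtain ⟨h1, h2, h3, h4⟩ := h w hw
    have hma : m w ≠ a := fun hh => ha (hh ▸ h1)
    have hmb : m w ≠ b := fun hh => hb (hh ▸ h1)
    have ew : m' w = m w := by simp [hm'def, hwa, hwb]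
    have ew2 : m' (m w) = m (m w) := by simp [hm'def, hma, hmb]
    rw [ew, ew2]
    exact ⟨Or.inl h1, h2, h3, h4⟩
  · rcases hw with rfl | hw
    · rw [ea]
      exact ⟨Or.inr (Or.inr rfl), hne.symm, hab, eb⟩
    · rw [Set.mem_singleton_iff] at hw
      subst hw
      rw [eb]
      exact ⟨Or.inr (Or.inl rfl), hne, hab.symm, ea⟩

/-- Chain decomposition: an injective "pivot" assignment on `W` in a tree gives a
perfectly matchable superset of `W`. -/
lemma chain (hT : T.IsTree) (W : Set V) (p : V → V)
    (hadj : ∀ v ∈ W, T.Adj (p v) v)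
    (hinj : ∀ v ∈ W, ∀ u ∈ W, p v = p u → v = u) :
    ∃ W', W ⊆ W' ∧ W' ⊆ W ∪ (p '' W) ∧ PM T W' := by
  classical
  generalize hn : W.ncard = n
  induction n using Nat.strong_induction_on generalizing W with
  | _ n ih =>
  rcases Set.eq_empty_or_nonempty W with rfl | hWne
  · exact ⟨∅, le_refl _, by simp, id, fun v hv => absurd hv (Set.notMem_empty v)⟩
  by_cases hA : ∃ a ∈ W, a ∉ p '' (W \ {a})
  · obtain ⟨a₀, ha₀, ha₀im⟩ := hA
    have hpa₀ : p a₀ ≠ a₀ := fun hh => T.irrefl (hh ▸ hadj a₀ ha₀)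
    set a₁ := p a₀ with ha₁def
    have key : ∀ (W₂ : Set V), W₂ ⊆ W → a₀ ∉ W₂ → a₁ ∉ W₂ → W \ {a₀, a₁} ⊆ W₂ →
        ∃ W', W ⊆ W' ∧ W' ⊆ W ∪ (p '' W) ∧ PM T W' := by
      intro W₂ hsub ha₀n ha₁n hsup
      have hlt : W₂.ncard < n := by
        rw [← hn]
        exact Set.ncard_lt_ncard (Set.ssubset_iff_of_subset hsub |>.2 ⟨a₀, ha₀, ha₀n⟩)
          (Set.toFinite W)
      obtain ⟨W'', hsub'', hsup'', m'', hm''⟩ :=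
        ih W₂.ncard hlt W₂ (fun v hv => hadj v (hsub hv))
          (fun v hv u hu => hinj v (hsub hv) u (hsub hu)) rfl
      have ha₀'' : a₀ ∉ W'' := by
        intro hmem
        rcases hsup'' hmem with h | h
        · exact ha₀n h
        · obtain ⟨x, hx, hpx⟩ := h
          exact ha₀im ⟨x, ⟨hsub hx, fun hh => ha₀n ((Set.mem_singleton_iff.1 hh) ▸ hx)⟩, hpx⟩
      have ha₁'' : a₁ ∉ W'' := by
        intro hmem
        rcases hsup'' hmem with h | h
        · exact ha₁n h
        · obtain ⟨x, hx, hpx⟩ := h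
          have : x = a₀ := hinj x (hsub hx) a₀ ha₀ hpx
          exact ha₀n (this ▸ hx)
      refine ⟨W'' ∪ {a₀, a₁}, ?_, ?_, _, hm''.extend_pair ((hadj a₀ ha₀).symm) ha₀'' ha₁''⟩
      · intro v hv
        by_cases hva : v = a₀
        · exact Or.inr (Or.inl hva)
        by_cases hvb : v = a₁
        · exact Or.inr (Or.inr hvb)
        · exact Or.inl (hsub'' (hsup ⟨hv, by simp [hva, hvb]⟩))
      · intro v hv
        rcases hv with hv | hv
        · rcases hsup'' hv with h | h
          · exact Or.inl (hsub h)
          · obtain ⟨x, hx, hpx⟩ := h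
            exact Or.inr ⟨x, hsub hx, hpx⟩
        · rcases hv with rfl | hv
          · exact Or.inl ha₀
          · rw [Set.mem_singleton_iff] at hv
            exact Or.inr (hv ▸ ⟨a₀, ha₀, rfl⟩)
    by_cases hcase : a₁ ∈ W
    · exact key (W \ {a₀, a₁}) Set.diff_subset (by simp) (by simp)
        (fun v hv => hv)
    · refine key (W \ {a₀}) Set.diff_subset (by simp) (fun hh => hcase hh.1) ?_
      intro v hv
      exact ⟨hv.1, fun hh => hv.2 (Or.inl hh)⟩
  · -- every element of W has a preimage in W: p restricts to a bijection of W
    push_neg at hA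
    have himW : W = p '' W := by
      apply Set.eq_of_subset_of_ncard_le _ _ (Set.toFinite _)
      · intro a ha
        obtain ⟨x, hx, hpx⟩ := hA a ha
        exact ⟨x, hx.1, hpx⟩
      · exact Set.ncard_image_le (Set.toFinite W)
    have hmapsto : ∀ v ∈ W, p v ∈ W := fun v hv => himW ▸ ⟨v, hv, rfl⟩
    by_cases hB : ∃ a ∈ W, p (p a) = a
    · obtain ⟨a, ha, hpa⟩ := hB
      have hpaW : p a ∈ W := hmapsto a ha
      have hne : p a ≠ a := fun hh => T.irrefl (hh ▸ hadj a ha)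
      set W₂ := W \ {a, p a} with hW₂def
      have hlt : W₂.ncard < n := by
        rw [← hn]
        exact Set.ncard_lt_ncard (Set.ssubset_iff_of_subset Set.diff_subset |>.2
          ⟨a, ha, by simp⟩) (Set.toFinite W)
      obtain ⟨W'', hsub'', hsup'', m'', hm''⟩ :=
        ih W₂.ncard hlt W₂ (fun v hv => hadj v hv.1)
          (fun v hv u hu => hinj v hv.1 u hu.1) rfl
      have haint : ∀ x ∈ W₂, p x ≠ a ∧ p x ≠ p a := by
        intro x hx
        constructor
        · intro hh
          have : x = p a := hinj x hx.1 (p a) hpaW (hh.trans hpa.symm)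
          exact hx.2 (by simp [this])
        · intro hh
          have : x = a := hinj x hx.1 a ha hh
          exact hx.2 (by simp [this])
      have ha'' : a ∉ W'' := by
        intro hmem
        rcases hsup'' hmem with h | h
        · exact h.2 (by simp)
        · obtain ⟨x, hx, hpx⟩ := h
          exact (haint x hx).1 hpx
      have hpa'' : p a ∉ W'' := by
        intro hmem
        rcases hsup'' hmem with h | h
        · exact h.2 (by simp)
        · obtain ⟨x, hx, hpx⟩ := h
          exact (haint x hx).2 hpx
      refine ⟨W'' ∪ {a, p a}, ?_, ?_, _,
        hm''.extend_pair ((hadj a ha).symm) ha'' hpa''⟩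
      · intro v hv
        by_cases hva : v = a
        · exact Or.inr (Or.inl hva)
        by_cases hvb : v = p a
        · exact Or.inr (Or.inr hvb)
        · exact Or.inl (hsub'' ⟨hv, by simp [hva, hvb]⟩)
      · intro v hv
        rcases hv with hv | hv
        · rcases hsup'' hv with h | h
          · exact Or.inl h.1
          · obtain ⟨x, hx, hpx⟩ := h
            exact Or.inr ⟨x, hx.1, hpx⟩
        · rcases hv with rfl | hv
          · exact Or.inl ha
          · rw [Set.mem_singleton_iff] at hv
            exact Or.inr (hv ▸ ⟨a, ha, rfl⟩)
    · -- no 2-cycles: contradiction with acyclicity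
      push_neg at hB
      exfalso
      have hWfin : W.Finite := Set.toFinite W
      set E : Finset (Sym2 V) := hWfin.toFinset.image (fun a => s(a, p a)) with hEdef
      have hcard : E.card = hWfin.toFinset.card := by
        apply Finset.card_image_of_injOn
        intro x hx y hy hself
        simp only [Finset.mem_coe, Set.Finite.mem_toFinset] at hx hy
        rw [Sym2.eq_iff] at hself
        rcases hself with ⟨h1, _⟩ | ⟨h1, h2⟩
        · exact h1
        · exfalso
          apply hB x hx
          rw [h2, ← h1]
      have hlt := card_edges_lt hT hWfin.toFinset
        (by rwa [Set.Finite.toFinset_nonempty]) E ?_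
      · omega
      · intro e he
        rw [hEdef, Finset.mem_image] at he
        obtain ⟨a, ha, rfl⟩ := he
        rw [Set.Finite.mem_toFinset] at ha
        exact ⟨a, p a, rfl, (hadj a ha).symm, Set.Finite.mem_toFinset _ |>.2 ha,
          Set.Finite.mem_toFinset _ |>.2 (hmapsto a ha)⟩

end PM

section Forcing

variable {T : SimpleGraph V}

/-- One round of the skew color change rule. -/
def stepF (T : SimpleGraph V) (B : Set V) : Set V :=
  B ∪ {v | ∃ u, T.Adj u v ∧ ∀ w, T.Adj u w → w ≠ v → w ∈ B}

lemma stepF_mono {B B' : Set V} (h : B ⊆ B') : stepF T B ⊆ stepF T B' := by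
  intro v hv
  rcases hv with hv | ⟨u, hu1, hu2⟩
  · exact Or.inl (h hv)
  · exact Or.inr ⟨u, hu1, fun w hw hwv => h (hu2 w hw hwv)⟩

lemma iter_mono (S : Set V) {m n : ℕ} (h : m ≤ n) :
    (stepF T)^[m] S ⊆ (stepF T)^[n] S := by
  induction n with
  | zero => rw [Nat.le_zero.1 h]
  | succ n ih =>
    rcases Nat.le_succ_iff.mp h with h' | rfl
    · rcases Nat.lt_succ_iff_lt_or_eq.1 (Nat.lt_succ_of_le h') with h'' | rfl
      · refine (ih (Nat.lt_succ_iff.1 (Nat.lt_succ_of_lt h''))).trans ?_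
        rw [Function.iterate_succ_apply']
        exact Set.subset_union_left
      · rw [Function.iterate_succ_apply']
        exact Set.subset_union_left
    · exact le_refl _

lemma exists_bound (S : Set V) (s : Finset V)
    (h : ∀ w ∈ s, ∃ n, w ∈ (stepF T)^[n] S) :
    ∃ N, ∀ w ∈ s, w ∈ (stepF T)^[N] S := by
  classical
  induction s using Finset.induction with
  | empty => exact ⟨0, by simp⟩
  | @insert a s' ha ih =>
    obtain ⟨N, hN⟩ := ih (fun w hw => h w (Finset.mem_insert_of_mem hw))
    obtain ⟨M, hM⟩ := h a (Finset.mem_insert_self a s')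
    refine ⟨max N M, fun w hw => ?_⟩
    rcases Finset.mem_insert.1 hw with rfl | hw
    · exact iter_mono S (le_max_right N M) hM
    · exact iter_mono S (le_max_left N M) (hN w hw)

lemma skewForced_iff_iter [Fintype V] {S : Set V} {v : V} :
    SkewForced T S v ↔ ∃ n, v ∈ (stepF T)^[n] S := by
  constructor
  · intro h
    induction h with
    | mem h => exact ⟨0, h⟩
    | @force u v hadj hprem ih =>
      obtain ⟨N, hN⟩ := exists_bound S ((T.neighborFinset u).filter (fun w => w ≠ v))
        (fun w hw => by
          rw [Finset.mem_filter, SimpleGraph.mem_neighborFinset] at hw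
          exact ih w hw.1 hw.2)
      refine ⟨N + 1, ?_⟩
      rw [Function.iterate_succ_apply']
      refine Or.inr ⟨u, hadj, fun w hw hwv => ?_⟩
      exact hN w (by rw [Finset.mem_filter, SimpleGraph.mem_neighborFinset]; exact ⟨hw, hwv⟩)
  · rintro ⟨n, hn⟩
    induction n generalizing v with
    | zero => exact SkewForced.mem hn
    | succ n ih =>
      rw [Function.iterate_succ_apply'] at hn
      rcases hn with hn | ⟨u, hu1, hu2⟩
      · exact ih hn
      · exact SkewForced.force hu1 (fun w hw hwv => ih (hu2 w hw hwv))

/-- From a successful skew forcing, extract an injective pivot assignment on the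
complement of `S`. -/
lemma pivot_exists [Fintype V] {S : Set V} (hS : IsSkewForcingSet T S) :
    ∃ p : V → V, (∀ v ∈ Sᶜ, T.Adj (p v) v) ∧
      (∀ v ∈ Sᶜ, ∀ u ∈ Sᶜ, p v = p u → v = u) := by
  classical
  have hex : ∀ v : V, ∃ n, v ∈ (stepF T)^[n] S := by
    intro v
    rw [← skewForced_iff_iter]
    have : v ∈ skewClosure T S := by rw [hS]; trivial
    exact this
  set t : V → ℕ := fun v => Nat.find (hex v) with htdef
  have hmem : ∀ v, v ∈ (stepF T)^[t v] S := fun v => Nat.find_spec (hex v)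
  have hpiv : ∀ v, v ∉ S → ∃ u, T.Adj u v ∧
      ∀ w, T.Adj u w → w ≠ v → t w < t v := by
    intro v hv
    have htpos : 0 < t v := by
      rcases Nat.eq_zero_or_pos (t v) with h0 | h
      · exfalso; apply hv
        have := hmem v
        rwa [h0, Function.iterate_zero_apply] at this
      · exact h
    have hv2 := hmem v
    have hlt : t v - 1 < t v := by omega
    have hnot : v ∉ (stepF T)^[t v - 1] S := Nat.find_min (hex v) hlt
    obtain ⟨k, hk⟩ : ∃ k, t v = k + 1 := ⟨t v - 1, by omega⟩
    rw [hk, Function.iterate_succ_apply'] at hv2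
    rcases hv2 with hv2 | ⟨u, hu1, hu2⟩
    · exfalso; apply hnot
      have : k = t v - 1 := by omega
      rwa [← this]
    · refine ⟨u, hu1, fun w hw hwv => ?_⟩
      have : w ∈ (stepF T)^[k] S := hu2 w hw hwv
      have : t w ≤ k := Nat.find_le this
      omega
  set p : V → V := fun v => if h : v ∉ S then (hpiv v h).choose else v with hpdef
  refine ⟨p, fun v hv => ?_, fun v hv u hu hpu => ?_⟩
  · have hv' : v ∉ S := hv
    have h := (hpiv v hv').choose_spec
    rw [hpdef]
    simp only [dif_pos hv']
    exact h.1
  · by_contra hne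
    have hv' : v ∉ S := hv
    have hu' : u ∉ S := hu
    have h1 := (hpiv v hv').choose_spec
    have h2 := (hpiv u hu').choose_spec
    rw [hpdef] at hpu
    simp only [dif_pos hv', dif_pos hu'] at hpu
    have hlt1 : t u < t v := by
      apply h1.2 u _ (fun hh => hne hh.symm)
      rw [hpu]
      exact h2.1
    have hlt2 : t v < t u := by
      apply h2.2 v _ (fun hh => hne hh)
      rw [← hpu]
      exact h1.1
    omega

/-- Every skew forcing set in a tree has a perfectly matchable superset of its
complement. -/
lemma forcing_pm_superset [Fintype V] (hT : T.IsTree) {S : Set V}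
    (hS : IsSkewForcingSet T S) :
    ∃ W', Sᶜ ⊆ W' ∧ PM T W' := by
  obtain ⟨p, hadj, hinj⟩ := pivot_exists hS
  obtain ⟨W', h1, _, h3⟩ := chain hT Sᶜ p hadj hinj
  exact ⟨W', h1, h3⟩

end Forcing

section EL

variable {T : SimpleGraph V}

/-- Leaf-pair elimination scheme for a matched set. -/
def EL (T : SimpleGraph V) : List (V × V) → Set V → Prop
  | [], W => W = ∅
  | (w, b) :: l, W => w ∈ W ∧ b ∈ W ∧ T.Adj w b ∧ (∀ x ∈ W, T.Adj w x → x = b) ∧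
      EL T l (W \ {w, b})

lemma EL_mem {l : List (V × V)} {W : Set V} (h : EL T l W) :
    ∀ q ∈ l, q.1 ∈ W ∧ q.2 ∈ W := by
  induction l generalizing W with
  | nil => intro q hq; exact absurd hq List.not_mem_nil
  | cons q' l ih =>
    obtain ⟨w, b⟩ := q'
    obtain ⟨h1, h2, h3, h4, h5⟩ := h
    intro q hq
    rcases List.mem_cons.1 hq with rfl | hq
    · exact ⟨h1, h2⟩
    · obtain ⟨hh1, hh2⟩ := ih h5 q hq
      exact ⟨hh1.1, hh2.1⟩

lemma EL_adj {l : List (V × V)} {W : Set V} (h : EL T l W) :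
    ∀ q ∈ l, T.Adj q.1 q.2 := by
  induction l generalizing W with
  | nil => intro q hq; exact absurd hq List.not_mem_nil
  | cons q' l ih =>
    obtain ⟨w, b⟩ := q'
    obtain ⟨h1, h2, h3, h4, h5⟩ := h
    intro q hq
    rcases List.mem_cons.1 hq with rfl | hq
    · exact h3
    · exact ih h5 q hq

lemma EL_union {l : List (V × V)} {W : Set V} (h : EL T l W) :
    ∀ x ∈ W, ∃ q ∈ l, x = q.1 ∨ x = q.2 := by
  induction l generalizing W with
  | nil => intro x hx; rw [h] at hx; exact absurd hx (Set.notMem_empty x)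
  | cons q' l ih =>
    obtain ⟨w, b⟩ := q'
    obtain ⟨h1, h2, h3, h4, h5⟩ := h
    intro x hx
    by_cases hxw : x = w
    · exact ⟨(w, b), List.mem_cons_self, Or.inl hxw⟩
    by_cases hxb : x = b
    · exact ⟨(w, b), List.mem_cons_self, Or.inr hxb⟩
    · obtain ⟨q, hq, hq2⟩ := ih h5 x ⟨hx, by simp [hxw, hxb]⟩
      exact ⟨q, List.mem_cons_of_mem _ hq, hq2⟩

lemma EL_drop_last {l : List (V × V)} {w b : V} {W : Set V}
    (h : EL T (l ++ [(w, b)]) W) : EL T l (W \ {w, b}) := by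
  induction l generalizing W with
  | nil => exact h.2.2.2.2
  | cons q' l ih =>
    obtain ⟨w', b'⟩ := q'
    obtain ⟨h1, h2, h3, h4, h5⟩ := h
    have hwb : w ∈ W \ {w', b'} ∧ b ∈ W \ {w', b'} :=
      EL_mem h5 (w, b) (by simp)
    refine ⟨⟨h1, ?_⟩, ⟨h2, ?_⟩, h3, fun x hx hax => h4 x hx.1 hax, ?_⟩
    · intro hmem
      rcases hmem with hmem | hmem
      · exact (hwb.1.2) (Or.inl hmem.symm)
      · rw [Set.mem_singleton_iff] at hmem
        exact (hwb.2.2) (Or.inl hmem.symm)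
    · intro hmem
      rcases hmem with hmem | hmem
      · exact (hwb.1.2) (Or.inr (Set.mem_singleton_iff.2 hmem.symm))
      · rw [Set.mem_singleton_iff] at hmem
        exact (hwb.2.2) (Or.inr (Set.mem_singleton_iff.2 hmem.symm))
    · have h6 := ih h5
      have hset : (W \ ({w', b'} : Set V)) \ ({w, b} : Set V)
          = (W \ ({w, b} : Set V)) \ ({w', b'} : Set V) := by
        ext x; simp only [Set.mem_diff]; tauto
      rwa [hset] at h6

lemma EL_no_adj_last {l : List (V × V)} {w b : V} {W : Set V}
    (h : EL T (l ++ [(w, b)]) W) :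
    ∀ q ∈ l, ¬ T.Adj q.1 b ∧ ¬ T.Adj q.1 w := by
  induction l generalizing W with
  | nil => intro q hq; exact absurd hq List.not_mem_nil
  | cons q' l ih =>
    obtain ⟨w', b'⟩ := q'
    obtain ⟨h1, h2, h3, h4, h5⟩ := h
    intro q hq
    rcases List.mem_cons.1 hq with rfl | hq
    · have hwb : w ∈ W \ {w', b'} ∧ b ∈ W \ {w', b'} :=
        EL_mem h5 (w, b) (by simp)
      constructor
      · intro hadj
        have := h4 b hwb.2.1 hadj
        exact hwb.2.2 (this ▸ Or.inr rfl)
      · intro hadj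
        have := h4 w hwb.1.1 hadj
        exact hwb.1.2 (this ▸ Or.inr rfl)
    · exact ih h5 q hq

lemma EL_snd_forced {S : Set V} {l : List (V × V)} {W X : Set V} (h : EL T l W)
    (hout : ∀ u, u ∉ W → u ∉ X → SkewForced T S u)
    (hX : ∀ x ∈ X, ∀ q ∈ l, ¬ T.Adj x q.1) :
    ∀ q ∈ l, SkewForced T S q.2 := by
  induction l generalizing W X with
  | nil => intro q hq; exact absurd hq List.not_mem_nil
  | cons q' l ih =>
    obtain ⟨w, b⟩ := q'
    obtain ⟨h1, h2, h3, h4, h5⟩ := h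
    have hb : SkewForced T S b := by
      refine SkewForced.force h3 (fun z hz hzb => ?_)
      have hzW : z ∉ W := fun hmem => hzb (h4 z hmem hz)
      have hzX : z ∉ X := fun hmem => hX z hmem (w, b) (List.mem_cons_self) hz.symm
      exact hout z hzW hzX
    intro q hq
    rcases List.mem_cons.1 hq with rfl | hq
    · exact hb
    · refine ih (X := X ∪ {w}) h5 (fun u hu1 hu2 => ?_) (fun x hx q' hq' hadj => ?_) q hq
      · by_cases hub : u = b
        · exact hub ▸ hb
        · by_cases huw : u = w
          · exact absurd (Or.inr (Set.mem_singleton_iff.2 huw)) hu2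
          · apply hout u _ (fun hmem => hu2 (Or.inl hmem))
            intro hmem
            exact hu1 ⟨hmem, by simp [huw, hub]⟩
      · rcases hx with hx | hx
        · exact hX x hx q' (List.mem_cons_of_mem _ hq') hadj
        · rw [Set.mem_singleton_iff] at hx
          subst hx
          -- x = w : w is not adjacent to any later fst
          have hq'W := EL_mem h5 q' hq'
          have := h4 q'.1 hq'W.1.1 hadj
          exact hq'W.1.2 (this ▸ Or.inr rfl)


lemma EL_fst_forced {S : Set V} {l : List (V × V)} {W : Set V} (h : EL T l W)
    (hout : ∀ u, u ∉ W → SkewForced T S u)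
    (hsnd : ∀ q ∈ l, SkewForced T S q.2) :
    ∀ q ∈ l, SkewForced T S q.1 := by
  induction l using List.reverseRecOn generalizing W with
  | nil => intro q hq; exact absurd hq List.not_mem_nil
  | append_singleton l q' ih =>
    obtain ⟨w, b⟩ := q'
    have hadjwb : T.Adj w b := EL_adj h (w, b) (by simp)
    have hw : SkewForced T S w := by
      refine SkewForced.force hadjwb.symm (fun z hz hzw => ?_)
      by_cases hzW : z ∈ W
      · obtain ⟨q, hq, hq2⟩ := EL_union h z hzW
        rcases List.mem_append.1 hq with hq | hq
        · rcases hq2 with hq2 | hq2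
          · exfalso
            exact (EL_no_adj_last h q hq).1 (hq2 ▸ hz.symm)
          · exact hq2 ▸ hsnd q (List.mem_append_left _ hq)
        · rw [List.mem_singleton] at hq
          subst hq
          rcases hq2 with hq2 | hq2
          · exact absurd hq2 hzw
          · exact absurd (hq2 ▸ hz) T.irrefl
      · exact hout z hzW
    intro q hq
    rcases List.mem_append.1 hq with hq | hq
    · refine ih (EL_drop_last h) (fun u hu => ?_) (fun q'' hq'' => hsnd q''
        (List.mem_append_left _ hq'')) q hq
      by_cases huW : u ∈ W
      · have hmem : u ∈ ({w, b} : Set V) := by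
          by_contra hne
          exact hu ⟨huW, hne⟩
        rcases hmem with hmem | hmem
        · exact hmem ▸ hw
        · rw [Set.mem_singleton_iff] at hmem
          exact hmem ▸ hsnd (w, b) (List.mem_append_right _ (by simp))
      · exact hout u huW
    · rw [List.mem_singleton] at hq
      subst hq
      exact hw

/-- A perfectly matched set admits a leaf-pair elimination scheme. -/
lemma pm_el [Fintype V] (hT : T.IsTree) {W : Set V} {m : V → V} (hm : IsPM T W m) :
    ∃ l, EL T l W := by
  classical
  generalize hn : W.ncard = n
  induction n using Nat.strong_induction_on generalizing W with
  | _ n ih =>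
  rcases Set.eq_empty_or_nonempty W with rfl | hWne
  · exact ⟨[], rfl⟩
  have hWfin : W.Finite := Set.toFinite W
  obtain ⟨w, hwW, hleaf⟩ := exists_leaf hT hWfin.toFinset
    (by rwa [Set.Finite.toFinset_nonempty])
  rw [Set.Finite.mem_toFinset] at hwW
  obtain ⟨hb1, hb2, hb3, hb4⟩ := hm w hwW
  set b := m w with hbdef
  have hleaf' : ∀ x ∈ W, T.Adj w x → x = b := by
    intro x hx hax
    exact hleaf x (Set.Finite.mem_toFinset _ |>.2 hx) b
      (Set.Finite.mem_toFinset _ |>.2 hb1) hax hb3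
  have hm2 : IsPM T (W \ {w, b}) m := by
    intro x hx
    obtain ⟨g1, g2, g3, g4⟩ := hm x hx.1
    have hxw : x ≠ w := fun hh => hx.2 (Or.inl hh)
    have hxb : x ≠ b := fun hh => hx.2 (Or.inr (Set.mem_singleton_iff.2 hh))
    have hmxw : m x ≠ w := by
      intro hh
      apply hxb
      rw [hbdef, ← hh, g4]
    have hmxb : m x ≠ b := by
      intro hh
      apply hxw
      have : m (m x) = m b := by rw [hh]
      rw [g4, hbdef, hb4] at this
      exact this
    exact ⟨⟨g1, by simp [hmxw, hmxb]⟩, g2, g3, g4⟩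
  have hlt : (W \ {w, b}).ncard < n := by
    rw [← hn]
    exact Set.ncard_lt_ncard (Set.ssubset_iff_of_subset Set.diff_subset |>.2
      ⟨w, hwW, fun hh => hh.2 (Or.inl rfl)⟩) hWfin
  obtain ⟨l, hl⟩ := ih _ hlt hm2 rfl
  exact ⟨(w, b) :: l, hwW, hb1, hb3, hleaf', hl⟩

/-- A set whose complement is perfectly matchable is a skew forcing set. -/
lemma pm_compl_forcing [Fintype V] (hT : T.IsTree) {S : Set V} (h : PM T Sᶜ) :
    IsSkewForcingSet T S := by
  obtain ⟨m, hm⟩ := h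
  obtain ⟨l, hl⟩ := pm_el hT hm
  have hout : ∀ u, u ∉ Sᶜ → u ∉ (∅ : Set V) → SkewForced T S u := by
    intro u hu _
    exact SkewForced.mem (by simpa using hu)
  have hsnd := EL_snd_forced hl hout (fun x hx => absurd hx (Set.notMem_empty x))
  have hfst := EL_fst_forced hl (fun u hu => hout u hu (Set.notMem_empty u)) hsnd
  rw [IsSkewForcingSet, Set.eq_univ_iff_forall]
  intro v
  by_cases hv : v ∈ Sᶜ
  · obtain ⟨q, hq, hq2⟩ := EL_union hl v hv
    rcases hq2 with hq2 | hq2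
    · exact hq2 ▸ hfst q hq
    · exact hq2 ▸ hsnd q hq
  · exact SkewForced.mem (by simpa using hv)

end EL

section Number

variable [Fintype V] {T : SimpleGraph V}

/-- The sizes of perfectly matchable sets. -/
def pmSizes (T : SimpleGraph V) : Set ℕ := {n | ∃ W : Set V, PM T W ∧ W.ncard = n}

lemma pmSizes_nonempty : (pmSizes T).Nonempty :=
  ⟨0, ∅, ⟨id, fun v hv => absurd hv (Set.notMem_empty v)⟩, Set.ncard_empty V⟩

lemma pmSizes_bddAbove : BddAbove (pmSizes T) := by
  refine ⟨Fintype.card V, fun n hn => ?_⟩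
  obtain ⟨W, _, rfl⟩ := hn
  have := Set.ncard_le_ncard (Set.subset_univ W) (Set.toFinite _)
  rwa [Set.ncard_univ, Nat.card_eq_fintype_card] at this

/-- The maximum size of a perfectly matchable set. -/
noncomputable def rmax (T : SimpleGraph V) [Fintype V] : ℕ := sSup (pmSizes T)

lemma rmax_mem : rmax T ∈ pmSizes T :=
  Nat.sSup_mem pmSizes_nonempty pmSizes_bddAbove

lemma le_rmax {W : Set V} (h : PM T W) : W.ncard ≤ rmax T :=
  le_csSup pmSizes_bddAbove ⟨W, h, rfl⟩

lemma compl_ncard (S : Set V) : Sᶜ.ncard = Fintype.card V - S.ncard := by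
  have := Set.ncard_add_ncard_compl S
  rw [Nat.card_eq_fintype_card] at this
  omega

lemma sfn_eq (hT : T.IsTree) : skewForcingNumber T = Fintype.card V - rmax T := by
  have hub : skewForcingNumber T ≤ Fintype.card V - rmax T := by
    obtain ⟨W, hW, hWcard⟩ := rmax_mem (T := T)
    apply Nat.sInf_le
    refine ⟨Wᶜ, ?_, pm_compl_forcing hT (by rwa [compl_compl])⟩
    rw [compl_ncard, hWcard]
  have hlb : ∀ n ∈ {n | ∃ S : Set V, S.ncard = n ∧ IsSkewForcingSet T S},
      Fintype.card V - rmax T ≤ n := by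
    rintro n ⟨S, rfl, hS⟩
    obtain ⟨W', hsub, hpm⟩ := forcing_pm_superset hT hS
    have h1 : Sᶜ.ncard ≤ W'.ncard := Set.ncard_le_ncard hsub (Set.toFinite _)
    have h2 : W'.ncard ≤ rmax T := le_rmax hpm
    have h3 := compl_ncard S
    have h4 := Set.ncard_le_ncard (Set.subset_univ S) (Set.toFinite _)
    rw [Set.ncard_univ, Nat.card_eq_fintype_card] at h4
    omega
  have hne : {n | ∃ S : Set V, S.ncard = n ∧ IsSkewForcingSet T S}.Nonempty := by
    refine ⟨(Set.univ : Set V).ncard, Set.univ, rfl, ?_⟩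
    rw [IsSkewForcingSet, Set.eq_univ_iff_forall]
    exact fun v => SkewForced.mem trivial
  exact le_antisymm hub (le_csInf hne hlb)

/-- A minimum skew forcing set has perfectly matchable complement of maximum size. -/
lemma min_forcing_pm (hT : T.IsTree) {S : Set V} (hS : IsSkewForcingSet T S)
    (hcard : S.ncard = skewForcingNumber T) :
    PM T Sᶜ ∧ Sᶜ.ncard = rmax T := by
  obtain ⟨W', hsub, hpm⟩ := forcing_pm_superset hT hS
  have h1 : Sᶜ.ncard ≤ W'.ncard := Set.ncard_le_ncard hsub (Set.toFinite _)
  have h2 : W'.ncard ≤ rmax T := le_rmax hpm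
  have h3 := compl_ncard S
  have hsfn := sfn_eq hT
  -- rmax ≤ card V
  have hr : rmax T ≤ Fintype.card V := by
    obtain ⟨W, _, hWcard⟩ := rmax_mem (T := T)
    have := Set.ncard_le_ncard (Set.subset_univ W) (Set.toFinite _)
    rw [Set.ncard_univ, Nat.card_eq_fintype_card] at this
    omega
  have hcompl : Sᶜ.ncard = rmax T := by omega
  have heq : Sᶜ = W' := Set.eq_of_subset_of_ncard_le hsub (by omega) (Set.toFinite _)
  exact ⟨heq ▸ hpm, hcompl⟩

end Number

section Exchange

variable {T : SimpleGraph V}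

/-- Alternating sequence for two matchings, starting at `y`, beginning with `m₂`. -/
def seqAlt (m₁ m₂ : V → V) (y : V) : ℕ → V
  | 0 => y
  | k + 1 => if k % 2 = 0 then m₂ (seqAlt m₁ m₂ y k) else m₁ (seqAlt m₁ m₂ y k)

lemma exchange [Fintype V] (hT : T.IsTree) {W₁ W₂ : Set V} {m₁ m₂ : V → V}
    (h₁ : IsPM T W₁ m₁) (h₂ : IsPM T W₂ m₂)
    (hmax : W₁.ncard = rmax T)
    {y : V} (hy : y ∈ W₂) (hy1 : y ∉ W₁) :
    ∃ x ∈ W₁, x ∉ W₂ ∧ PM T (insert y (W₁ \ {x})) := by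
  classical
  set seq : ℕ → V := seqAlt m₁ m₂ y with hseqdef
  have hseq0 : seq 0 = y := rfl
  have hstep₂ : ∀ i, i % 2 = 0 → seq (i + 1) = m₂ (seq i) := by
    intro i hi
    simp [hseqdef, seqAlt, hi]
  have hstep₁ : ∀ i, i % 2 = 1 → seq (i + 1) = m₁ (seq i) := by
    intro i hi
    simp [hseqdef, seqAlt, hi]
  set cond : ℕ → Prop :=
    fun k => (k % 2 = 0 → seq k ∈ W₂) ∧ (k % 2 = 1 → seq k ∈ W₁) with hconddef
  have hcond0 : cond 0 := ⟨fun _ => hy, fun h => absurd h (by omega)⟩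
  -- failure exists
  have hfail : ∃ k, ¬ cond k := by
    by_contra hall
    push_neg at hall
    -- distinctness of the whole sequence gives an injection ℕ → V
    have hdist : ∀ k, ∀ j, j < k → seq j ≠ seq k := by
      intro k
      induction k using Nat.strong_induction_on with
      | _ k IH =>
      intro j hjk heq
      have hk1 : 1 ≤ k := by omega
      obtain ⟨i, rfl⟩ : ∃ i, k = i + 1 := ⟨k - 1, by omega⟩
      by_cases hkpar : (i + 1) % 2 = 0
      · -- k even : incoming edge uses m₁
        have hipar : i % 2 = 1 := by omega
        have hiW : seq i ∈ W₁ := (hall i).2 hipar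
        have hdef : seq (i + 1) = m₁ (seq i) := hstep₁ i hipar
        have hinv : m₁ (seq (i + 1)) = seq i := by
          rw [hdef]; exact (h₁ _ hiW).2.2.2
        have hmemk : seq (i + 1) ∈ W₁ := by rw [hdef]; exact (h₁ _ hiW).1
        by_cases hji : j = i
        · subst hji
          exact (h₁ _ hiW).2.1 (by rw [← hdef, heq])
        by_cases hj0 : j = 0
        · subst hj0
          apply hy1
          rw [← hseq0, heq]
          exact hmemk
        by_cases hjpar : j % 2 = 0
        · -- same parity: incoming at j
          obtain ⟨i', rfl⟩ : ∃ i', j = i' + 1 := ⟨j - 1, by omega⟩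
          have hi'par : i' % 2 = 1 := by omega
          have hi'W : seq i' ∈ W₁ := (hall i').2 hi'par
          have hinvj : m₁ (seq (i' + 1)) = seq i' := by
            rw [hstep₁ i' hi'par]; exact (h₁ _ hi'W).2.2.2
          have : seq i' = seq i := by
            rw [← hinvj, heq, hinv]
          exact IH i (by omega) i' (by omega) this
        · -- different parity: outgoing at j
          have hjpar' : j % 2 = 1 := by omega
          have : seq (j + 1) = seq i := by
            rw [hstep₁ j hjpar', heq, hinv]
          exact IH i (by omega) (j + 1) (by omega) this
      · -- k odd : incoming edge uses m₂
        have hipar : i % 2 = 0 := by omega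
        have hiW : seq i ∈ W₂ := (hall i).1 hipar
        have hdef : seq (i + 1) = m₂ (seq i) := hstep₂ i hipar
        have hinv : m₂ (seq (i + 1)) = seq i := by
          rw [hdef]; exact (h₂ _ hiW).2.2.2
        by_cases hji : j = i
        · subst hji
          exact (h₂ _ hiW).2.1 (by rw [← hdef, heq])
        by_cases hjpar : j % 2 = 1
        · -- same parity (odd): incoming at j
          obtain ⟨i', rfl⟩ : ∃ i', j = i' + 1 := ⟨j - 1, by omega⟩
          have hi'par : i' % 2 = 0 := by omega
          have hi'W : seq i' ∈ W₂ := (hall i').1 hi'par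
          have hinvj : m₂ (seq (i' + 1)) = seq i' := by
            rw [hstep₂ i' hi'par]; exact (h₂ _ hi'W).2.2.2
          have : seq i' = seq i := by
            rw [← hinvj, heq, hinv]
          exact IH i (by omega) i' (by omega) this
        · -- different parity: outgoing at j (j even)
          have hjpar' : j % 2 = 0 := by omega
          have : seq (j + 1) = seq i := by
            rw [hstep₂ j hjpar', heq, hinv]
          have hj1i : j + 1 < i + 1 := by omega
          rcases Nat.lt_or_ge (j + 1) i with hlt | hge
          · exact IH i (by omega) (j + 1) hlt this
          · -- j + 1 = i : parity contradiction
            have : j + 1 = i := by omega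
            omega
    have hinj : Function.Injective seq := by
      intro a b hab
      rcases Nat.lt_trichotomy a b with h | h | h
      · exact absurd hab (hdist b a h)
      · exact h
      · exact absurd hab.symm (hdist a b h)
    obtain ⟨a, b, hne, hab⟩ := Finite.exists_ne_map_eq_of_infinite seq
    exact hne (hinj hab)
  set K := Nat.find hfail with hKdef
  have hKfail : ¬ cond K := Nat.find_spec hfail
  have hcondlt : ∀ i, i < K → cond i := fun i hi => by
    by_contra hc
    have h2 : Nat.find hfail ≤ i := Nat.find_le hc
    rw [← hKdef] at h2
    omega
  have hK1 : 1 ≤ K := by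
    rcases Nat.eq_zero_or_pos K with h0 | h
    · exact absurd (h0 ▸ hcond0) hKfail
    · exact h
  -- distinctness below K
  have hdist : ∀ k, k ≤ K → ∀ j, j < k → seq j ≠ seq k := by
    intro k
    induction k using Nat.strong_induction_on with
    | _ k IH =>
    intro hkK j hjk heq
    have hk1 : 1 ≤ k := by omega
    obtain ⟨i, rfl⟩ : ∃ i, k = i + 1 := ⟨k - 1, by omega⟩
    by_cases hkpar : (i + 1) % 2 = 0
    · have hipar : i % 2 = 1 := by omega
      have hiW : seq i ∈ W₁ := (hcondlt i (by omega)).2 hipar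
      have hdef : seq (i + 1) = m₁ (seq i) := hstep₁ i hipar
      have hinv : m₁ (seq (i + 1)) = seq i := by
        rw [hdef]; exact (h₁ _ hiW).2.2.2
      have hmemk : seq (i + 1) ∈ W₁ := by rw [hdef]; exact (h₁ _ hiW).1
      by_cases hji : j = i
      · subst hji
        exact (h₁ _ hiW).2.1 (by rw [← hdef, heq])
      by_cases hj0 : j = 0
      · subst hj0
        apply hy1
        rw [← hseq0, heq]
        exact hmemk
      by_cases hjpar : j % 2 = 0
      · obtain ⟨i', rfl⟩ : ∃ i', j = i' + 1 := ⟨j - 1, by omega⟩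
        have hi'par : i' % 2 = 1 := by omega
        have hi'W : seq i' ∈ W₁ := (hcondlt i' (by omega)).2 hi'par
        have hinvj : m₁ (seq (i' + 1)) = seq i' := by
          rw [hstep₁ i' hi'par]; exact (h₁ _ hi'W).2.2.2
        have : seq i' = seq i := by
          rw [← hinvj, heq, hinv]
        exact IH i (by omega) (by omega) i' (by omega) this
      · have hjpar' : j % 2 = 1 := by omega
        have : seq (j + 1) = seq i := by
          rw [hstep₁ j hjpar', heq, hinv]
        rcases Nat.lt_or_ge (j + 1) i with hlt | hge
        · exact IH i (by omega) (by omega) (j + 1) hlt this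
        · omega
    · have hipar : i % 2 = 0 := by omega
      have hiW : seq i ∈ W₂ := (hcondlt i (by omega)).1 hipar
      have hdef : seq (i + 1) = m₂ (seq i) := hstep₂ i hipar
      have hinv : m₂ (seq (i + 1)) = seq i := by
        rw [hdef]; exact (h₂ _ hiW).2.2.2
      by_cases hji : j = i
      · subst hji
        exact (h₂ _ hiW).2.1 (by rw [← hdef, heq])
      by_cases hjpar : j % 2 = 1
      · obtain ⟨i', rfl⟩ : ∃ i', j = i' + 1 := ⟨j - 1, by omega⟩
        have hi'par : i' % 2 = 0 := by omega
        have hi'W : seq i' ∈ W₂ := (hcondlt i' (by omega)).1 hi'par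
        have hinvj : m₂ (seq (i' + 1)) = seq i' := by
          rw [hstep₂ i' hi'par]; exact (h₂ _ hi'W).2.2.2
        have : seq i' = seq i := by
          rw [← hinvj, heq, hinv]
        exact IH i (by omega) (by omega) i' (by omega) this
      · have hjpar' : j % 2 = 0 := by omega
        have : seq (j + 1) = seq i := by
          rw [hstep₂ j hjpar', heq, hinv]
        rcases Nat.lt_or_ge (j + 1) i with hlt | hge
        · exact IH i (by omega) (by omega) (j + 1) hlt this
        · omega
  -- membership facts
  have hW₂odd : ∀ j, j ≤ K → j % 2 = 1 → seq j ∈ W₂ := by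
    intro j hj hpar
    obtain ⟨i, rfl⟩ : ∃ i, j = i + 1 := ⟨j - 1, by omega⟩
    have hipar : i % 2 = 0 := by omega
    have hiW : seq i ∈ W₂ := (hcondlt i (by omega)).1 hipar
    rw [hstep₂ i hipar]
    exact (h₂ _ hiW).1
  have hW₁even : ∀ j, 1 ≤ j → j ≤ K → j % 2 = 0 → seq j ∈ W₁ := by
    intro j hj1 hj hpar
    obtain ⟨i, rfl⟩ : ∃ i, j = i + 1 := ⟨j - 1, by omega⟩
    have hipar : i % 2 = 1 := by omega
    have hiW : seq i ∈ W₁ := (hcondlt i (by omega)).2 hipar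
    rw [hstep₁ i hipar]
    exact (h₁ _ hiW).1
  by_cases hKpar : K % 2 = 1
  · -- failure with odd K : augmenting path, contradiction with maximality
    exfalso
    have hxK : seq K ∉ W₁ := by
      intro hmem
      apply hKfail
      exact ⟨fun h => absurd h (by omega), fun _ => hmem⟩
    set P : Set V := {v | ∃ j, j ≤ K ∧ seq j = v} with hPdef
    have hPW₂ : P ⊆ W₂ := by
      rintro v ⟨j, hj, rfl⟩
      by_cases hpar : j % 2 = 1
      · exact hW₂odd j hj hpar
      · exact (hcondlt j (by omega)).1 (by omega)
    have hPsub : P ⊆ W₁ ∪ {y, seq K} := by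
      rintro v ⟨j, hj, rfl⟩
      by_cases hj0 : j = 0
      · exact Or.inr (Or.inl (by rw [hj0, hseq0]))
      by_cases hjK : j = K
      · exact Or.inr (Or.inr (by rw [hjK]; rfl))
      · by_cases hpar : j % 2 = 1
        · exact Or.inl ((hcondlt j (by omega)).2 hpar)
        · exact Or.inl (hW₁even j (by omega) hj (by omega))
    have hPclosed : ∀ v ∈ P, m₂ v ∈ P := by
      rintro v ⟨j, hj, rfl⟩
      by_cases hpar : j % 2 = 0
      · have hjK : j < K := by omega
        exact ⟨j + 1, by omega, hstep₂ j hpar⟩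
      · obtain ⟨i, rfl⟩ : ∃ i, j = i + 1 := ⟨j - 1, by omega⟩
        have hipar : i % 2 = 0 := by omega
        have hiW : seq i ∈ W₂ := (hcondlt i (by omega)).1 hipar
        have : m₂ (seq (i + 1)) = seq i := by
          rw [hstep₂ i hipar]; exact (h₂ _ hiW).2.2.2
        refine ⟨i, by omega, ?_⟩
        rw [this]
    have hPescape : ∀ v, v ∈ W₁ → v ∉ P → m₁ v ∉ P := by
      intro v hvW hvP hmP
      obtain ⟨i, hi, hieq⟩ := hmP
      have hvinv : v = m₁ (seq i) := by
        rw [hieq]; exact ((h₁ _ hvW).2.2.2).symm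
      by_cases hi0 : i = 0
      · subst hi0
        rw [hseq0] at hieq
        exact hy1 (hieq ▸ (h₁ _ hvW).1)
      by_cases hiK : i = K
      · subst hiK
        exact hxK (hieq ▸ (h₁ _ hvW).1)
      by_cases hpar : i % 2 = 1
      · -- outgoing m₁ at i
        have : v = seq (i + 1) := by rw [hvinv, ← hstep₁ i hpar]
        exact hvP ⟨i + 1, by omega, this.symm⟩
      · -- incoming m₁ at i (i even ≥ 2)
        obtain ⟨i', rfl⟩ : ∃ i', i = i' + 1 := ⟨i - 1, by omega⟩
        have hi'par : i' % 2 = 1 := by omega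
        have hi'W : seq i' ∈ W₁ := (hcondlt i' (by omega)).2 hi'par
        have : v = seq i' := by
          rw [hvinv, hstep₁ i' hi'par]
          exact (h₁ _ hi'W).2.2.2
        exact hvP ⟨i', by omega, this.symm⟩
    -- the new perfectly matched set
    set m' : V → V := fun v => if v ∈ P then m₂ v else m₁ v with hm'def
    have hpm' : IsPM T (W₁ ∪ {y, seq K}) m' := by
      intro v hv
      by_cases hvP : v ∈ P
      · have hvW₂ : v ∈ W₂ := hPW₂ hvP
        have e1 : m' v = m₂ v := by simp [hm'def, hvP]
        have e2 : m' (m' v) = m₂ (m₂ v) := by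
          rw [e1]
          simp [hm'def, hPclosed v hvP]
        rw [e2, e1]
        exact ⟨hPsub (hPclosed v hvP), (h₂ _ hvW₂).2.1, (h₂ _ hvW₂).2.2.1,
          (h₂ _ hvW₂).2.2.2⟩
      · have hvW₁ : v ∈ W₁ := by
          rcases hv with hv | hv
          · exact hv
          · exfalso
            rcases hv with rfl | hv
            · exact hvP ⟨0, by omega, hseq0⟩
            · rw [Set.mem_singleton_iff] at hv
              exact hvP (hv ▸ ⟨K, le_refl K, rfl⟩)
        have e1 : m' v = m₁ v := by simp [hm'def, hvP]
        have hmP : m₁ v ∉ P := hPescape v hvW₁ hvP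
        have e2 : m' (m' v) = m₁ (m₁ v) := by
          rw [e1]
          simp [hm'def, hmP]
        rw [e2, e1]
        exact ⟨Or.inl (h₁ _ hvW₁).1, (h₁ _ hvW₁).2.1, (h₁ _ hvW₁).2.2.1,
          (h₁ _ hvW₁).2.2.2⟩
    have hyK : y ≠ seq K := by
      have := hdist K (le_refl K) 0 (by omega)
      rw [hseq0] at this
      exact this
    have hKW₁ : seq K ∉ W₁ := hxK
    have hcard : (W₁ ∪ {y, seq K}).ncard = W₁.ncard + 2 := by
      rw [Set.union_comm]
      rw [Set.ncard_union_eq ?_ (Set.toFinite _) (Set.toFinite _)]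
      · rw [Set.ncard_pair hyK]
        omega
      · rw [Set.disjoint_left]
        intro a ha
        rcases ha with rfl | ha
        · exact hy1
        · rw [Set.mem_singleton_iff] at ha
          exact ha ▸ hKW₁
    have := le_rmax (T := T) ⟨m', hpm'⟩
    omega
  · -- success with even K : exchange
    have hKpar' : K % 2 = 0 := by omega
    have hxW₁ : seq K ∈ W₁ := hW₁even K hK1 (le_refl K) hKpar'
    have hxW₂ : seq K ∉ W₂ := by
      intro hmem
      exact hKfail ⟨fun _ => hmem, fun h => absurd h (by omega)⟩
    set P : Set V := {v | ∃ j, j < K ∧ seq j = v} with hPdef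
    have hPW₂ : P ⊆ W₂ := by
      rintro v ⟨j, hj, rfl⟩
      by_cases hpar : j % 2 = 1
      · exact hW₂odd j (by omega) hpar
      · exact (hcondlt j hj).1 (by omega)
    have hPsub : P ⊆ insert y (W₁ \ {seq K}) := by
      rintro v ⟨j, hj, rfl⟩
      by_cases hj0 : j = 0
      · exact Or.inl (by rw [hj0, hseq0])
      · refine Or.inr ⟨?_, ?_⟩
        · by_cases hpar : j % 2 = 1
          · exact (hcondlt j hj).2 hpar
          · exact hW₁even j (by omega) (by omega) (by omega)
        · intro hh
          rw [Set.mem_singleton_iff] at hh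
          exact hdist K (le_refl K) j hj hh
    have hPclosed : ∀ v ∈ P, m₂ v ∈ P := by
      rintro v ⟨j, hj, rfl⟩
      by_cases hpar : j % 2 = 0
      · have : j + 1 < K := by omega
        exact ⟨j + 1, this, hstep₂ j hpar⟩
      · obtain ⟨i, rfl⟩ : ∃ i, j = i + 1 := ⟨j - 1, by omega⟩
        have hipar : i % 2 = 0 := by omega
        have hiW : seq i ∈ W₂ := (hcondlt i (by omega)).1 hipar
        have : m₂ (seq (i + 1)) = seq i := by
          rw [hstep₂ i hipar]; exact (h₂ _ hiW).2.2.2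
        refine ⟨i, by omega, ?_⟩
        rw [this]
    have hPescape : ∀ v, v ∈ W₁ → v ≠ seq K → v ∉ P → m₁ v ∉ P ∧ m₁ v ≠ seq K := by
      intro v hvW hvK hvP
      have hvinvgen : ∀ i, m₁ v = seq i → v = m₁ (seq i) := by
        intro i hieq
        rw [← hieq]; exact ((h₁ _ hvW).2.2.2).symm
      constructor
      · intro hmP
        obtain ⟨i, hi, hieq⟩ := hmP
        have hvinv := hvinvgen i hieq.symm
        by_cases hi0 : i = 0
        · subst hi0
          rw [hseq0] at hieq
          exact hy1 (hieq ▸ (h₁ _ hvW).1)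
        by_cases hpar : i % 2 = 1
        · have : v = seq (i + 1) := by rw [hvinv, ← hstep₁ i hpar]
          by_cases hiK : i + 1 = K
          · exact hvK (by rw [this, hiK])
          · exact hvP ⟨i + 1, by omega, this.symm⟩
        · obtain ⟨i', rfl⟩ : ∃ i', i = i' + 1 := ⟨i - 1, by omega⟩
          have hi'par : i' % 2 = 1 := by omega
          have hi'W : seq i' ∈ W₁ := (hcondlt i' (by omega)).2 hi'par
          have : v = seq i' := by
            rw [hvinv, hstep₁ i' hi'par]
            exact (h₁ _ hi'W).2.2.2
          exact hvP ⟨i', by omega, this.symm⟩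
      · intro hmK
        have hvinv := hvinvgen K hmK
        -- m₁ (seq K) = seq (K-1)
        obtain ⟨i, hKeq⟩ : ∃ i, K = i + 1 := ⟨K - 1, by omega⟩
        have hipar : i % 2 = 1 := by omega
        have hiW : seq i ∈ W₁ := (hcondlt i (by omega)).2 hipar
        have : v = seq i := by
          rw [hvinv, hKeq, hstep₁ i hipar]
          exact (h₁ _ hiW).2.2.2
        exact hvP ⟨i, by omega, this.symm⟩
    set m' : V → V := fun v => if v ∈ P then m₂ v else m₁ v with hm'def
    have hpm' : IsPM T (insert y (W₁ \ {seq K})) m' := by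
      intro v hv
      by_cases hvP : v ∈ P
      · have hvW₂ : v ∈ W₂ := hPW₂ hvP
        have e1 : m' v = m₂ v := by simp [hm'def, hvP]
        have e2 : m' (m' v) = m₂ (m₂ v) := by
          rw [e1]
          simp [hm'def, hPclosed v hvP]
        rw [e2, e1]
        exact ⟨hPsub (hPclosed v hvP), (h₂ _ hvW₂).2.1, (h₂ _ hvW₂).2.2.1,
          (h₂ _ hvW₂).2.2.2⟩
      · have hvW₁ : v ∈ W₁ \ {seq K} := by
          rcases hv with rfl | hv
          · exact absurd ⟨0, by omega, hseq0⟩ hvP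
          · exact hv
        have e1 : m' v = m₁ v := by simp [hm'def, hvP]
        obtain ⟨hesc1, hesc2⟩ := hPescape v hvW₁.1
          (fun hh => hvW₁.2 (Set.mem_singleton_iff.2 hh)) hvP
        have e2 : m' (m' v) = m₁ (m₁ v) := by
          rw [e1]
          simp [hm'def, hesc1]
        rw [e2, e1]
        refine ⟨Or.inr ⟨(h₁ _ hvW₁.1).1, fun hh => hesc2 (Set.mem_singleton_iff.1 hh)⟩,
          (h₁ _ hvW₁.1).2.1, (h₁ _ hvW₁.1).2.2.1, (h₁ _ hvW₁.1).2.2.2⟩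
    exact ⟨seq K, hxW₁, hxW₂, m', hpm'⟩

end Exchange

/-- Main induction: walk from `S₁` to `S₂` through minimum skew forcing sets. -/
lemma main_induction [Fintype V] {T : SimpleGraph V} (hT : T.IsTree) :
    ∀ (n : ℕ) (S₁ S₂ : Set V),
    IsSkewForcingSet T S₁ → S₁.ncard = skewForcingNumber T →
    IsSkewForcingSet T S₂ → S₂.ncard = skewForcingNumber T →
    (S₁ \ S₂).ncard = n →
    Relation.ReflTransGen
      (fun S S' : Set V =>
        IsSkewForcingSet T S ∧ S.ncard = skewForcingNumber T ∧
        IsSkewForcingSet T S' ∧ S'.ncard = skewForcingNumber T ∧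
        (S \ S').ncard = 1 ∧ (S' \ S).ncard = 1)
      S₁ S₂ := by
  intro n
  induction n using Nat.strong_induction_on with
  | _ n IH =>
  intro S₁ S₂ h₁ h₁c h₂ h₂c hn
  by_cases heq : S₁ = S₂
  · exact heq ▸ Relation.ReflTransGen.refl
  -- S₁ \ S₂ is nonempty
  have hdiffne : (S₁ \ S₂).Nonempty := by
    rcases Set.eq_empty_or_nonempty (S₁ \ S₂) with hemp | hne
    · exfalso
      apply heq
      have hsub : S₁ ⊆ S₂ := by
        intro v hv
        by_contra hv2
        exact (Set.eq_empty_iff_forall_notMem.1 hemp v) ⟨hv, hv2⟩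
      exact Set.eq_of_subset_of_ncard_le hsub (by omega) (Set.toFinite _)
    · exact hne
  obtain ⟨y, hyS₁, hyS₂⟩ := hdiffne
  obtain ⟨⟨mm₁, hm₁⟩, hc₁⟩ := min_forcing_pm hT h₁ h₁c
  obtain ⟨⟨mm₂, hm₂⟩, hc₂⟩ := min_forcing_pm hT h₂ h₂c
  have hyW₂ : y ∈ S₂ᶜ := hyS₂
  have hyW₁ : y ∉ S₁ᶜ := fun hh => hh hyS₁
  obtain ⟨x, hxW₁, hxW₂, m', hpm'⟩ := exchange hT hm₁ hm₂ hc₁ hyW₂ hyW₁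
  have hxS₁ : x ∉ S₁ := hxW₁
  have hxS₂ : x ∈ S₂ := by
    by_contra hh
    exact hxW₂ hh
  have hxy : x ≠ y := fun hh => hxS₁ (hh ▸ hyS₁)
  set S' : Set V := insert x (S₁ \ {y}) with hS'def
  have hS'compl : S'ᶜ = insert y (S₁ᶜ \ {x}) := by
    ext v
    simp only [hS'def, Set.mem_compl_iff, Set.mem_insert_iff, Set.mem_diff,
      Set.mem_singleton_iff]
    constructor
    · intro h
      push_neg at h
      by_cases hvy : v = y
      · exact Or.inl hvy
      · exact Or.inr ⟨fun hv => hvy (h.2 hv), h.1⟩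
    · intro h hmem
      rcases h with rfl | ⟨h1, h2⟩
      · rcases hmem with hmem | hmem
        · exact hxy hmem.symm
        · exact hmem.2 rfl
      · rcases hmem with hmem | hmem
        · exact h2 hmem
        · exact h1 hmem.1
  have hS'forcing : IsSkewForcingSet T S' := by
    apply pm_compl_forcing hT
    rw [hS'compl]
    exact ⟨m', hpm'⟩
  have hS₁fin : S₁.Finite := Set.toFinite _
  have hy1 : 0 < S₁.ncard := (Set.ncard_pos (Set.toFinite _)).2 ⟨y, hyS₁⟩
  have hxdiff : x ∉ S₁ \ {y} := fun hh => hxS₁ hh.1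
  have hS'card : S'.ncard = S₁.ncard := by
    rw [hS'def, Set.ncard_insert_of_notMem hxdiff (Set.toFinite _),
      Set.ncard_diff_singleton_of_mem hyS₁]
    omega
  -- the edge S₁ → S'
  have hedge₁ : S₁ \ S' = {y} := by
    ext v
    simp only [hS'def, Set.mem_diff, Set.mem_insert_iff, Set.mem_singleton_iff]
    constructor
    · rintro ⟨hv1, hv2⟩
      push_neg at hv2
      exact hv2.2 hv1
    · rintro rfl
      refine ⟨hyS₁, ?_⟩
      push_neg
      exact ⟨hxy.symm, fun _ => rfl⟩
  have hedge₂ : S' \ S₁ = {x} := by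
    ext v
    simp only [hS'def, Set.mem_diff, Set.mem_insert_iff, Set.mem_singleton_iff]
    constructor
    · rintro ⟨hv1, hv2⟩
      rcases hv1 with rfl | hv1
      · rfl
      · exact absurd hv1.1 hv2
    · rintro rfl
      exact ⟨Or.inl rfl, hxS₁⟩
  -- recursion measure decreases
  have hrec : (S' \ S₂).ncard < n := by
    have hseteq : S' \ S₂ = (S₁ \ S₂) \ {y} := by
      ext v
      simp only [hS'def, Set.mem_diff, Set.mem_insert_iff, Set.mem_singleton_iff]
      constructor
      · rintro ⟨hv1, hv2⟩
        rcases hv1 with rfl | hv1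
        · exact absurd hxS₂ hv2
        · exact ⟨⟨hv1.1, hv2⟩, hv1.2⟩
      · rintro ⟨⟨hv1, hv2⟩, hv3⟩
        exact ⟨Or.inr ⟨hv1, hv3⟩, hv2⟩
    have hymem : y ∈ S₁ \ S₂ := ⟨hyS₁, hyS₂⟩
    rw [hseteq, Set.ncard_diff_singleton_of_mem hymem, ← hn]
    have : 0 < (S₁ \ S₂).ncard :=
      (Set.ncard_pos (Set.toFinite _)).2 ⟨y, hyS₁, hyS₂⟩
    omega
  refine Relation.ReflTransGen.head ?_ (IH _ hrec S' S₂ hS'forcing (by omega) h₂ h₂c rfl)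
  refine ⟨h₁, h₁c, hS'forcing, by omega, ?_, ?_⟩
  · rw [hedge₁, Set.ncard_singleton]
  · rw [hedge₂, Set.ncard_singleton]

end SkewAux

/-- The skew token exchange graph of a tree is connected: any two minimum skew
forcing sets are joined by a sequence of single-vertex exchanges through minimum
skew forcing sets. -/
theorem tree_skew_token_exchange_connected [Fintype V] (T : SimpleGraph V) (hT : T.IsTree)
    (S₁ S₂ : Set V)
    (h₁ : IsSkewForcingSet T S₁) (h₁c : S₁.ncard = skewForcingNumber T)
    (h₂ : IsSkewForcingSet T S₂) (h₂c : S₂.ncard = skewForcingNumber T) :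
    Relation.ReflTransGen
      (fun S S' : Set V =>
        IsSkewForcingSet T S ∧ S.ncard = skewForcingNumber T ∧
        IsSkewForcingSet T S' ∧ S'.ncard = skewForcingNumber T ∧
        (S \ S').ncard = 1 ∧ (S' \ S).ncard = 1)
      S₁ S₂ := by
  classical
  exact SkewAux.main_induction hT _ S₁ S₂ h₁ h₁c h₂ h₂c rfl
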